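/- Let T₁, …, T_r : X → X satisfy property (P₁) on a metric space X with a common fixed point. Then T = T₁ ∘ ⋯ ∘ T_r is asymptotically regular: for every x₀ ∈ X, lim_{k→∞} d(T^k x₀, T^{k+1} x₀) = 0. -/

import Mathlib

open Filter Topology

/-- The composition `T 0 ∘ T 1 ∘ ⋯ ∘ T (r-1)` of a finite family of self-maps. -/
def compFam {X : Type*} {r : ℕ} (T : Fin r → X → X) : X → X :=
  (List.ofFn T).foldr (· ∘ ·) id

/-- The composition of finitely many mappings satisfying property (P₁) with a common fixed
point is asymptotically regular. -/
theorem composition_asymptotically_regular {X : Type*} [MetricSpace X]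
    {r : ℕ} (T : Fin r → X → X)
    (hP1 : ∀ i : Fin r, ∃ l > (0:ℝ), ∃ β > (0:ℝ), (∃ w, T i w = w) ∧
      ∀ x w : X, T i w = w →
        dist (T i x) w ^ l ≤ dist x w ^ l - β * dist (T i x) x ^ l)
    (hcommon : ∃ u : X, ∀ i, T i u = u) (x₀ : X) :
    Tendsto (fun k => dist ((compFam T)^[k] x₀) ((compFam T)^[k + 1] x₀))
      atTop (𝓝 0) := by
  obtain ⟨u, hu⟩ := hcommon
  -- choose exponents and constants, extended to all of ℕ
  have H : ∀ j : ℕ, ∃ l : ℝ, 0 < l ∧ ∃ β : ℝ, 0 < β ∧ ∀ (h : j < r), ∀ x : X,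
      dist (T ⟨j, h⟩ x) u ^ l ≤ dist x u ^ l - β * dist (T ⟨j, h⟩ x) x ^ l := by
    intro j
    by_cases h : j < r
    · obtain ⟨l, hl, β, hβ, -, hin⟩ := hP1 ⟨j, h⟩
      exact ⟨l, hl, β, hβ, fun _ x => hin x u (hu _)⟩
    · exact ⟨1, one_pos, 1, one_pos, fun h' => absurd h' h⟩
  choose l hl β hβ hineq using H
  set S : X → X := compFam T with hS
  -- key pointwise estimates over one block
  have key : ∀ x : X, dist (S x) u ≤ dist x u ∧
      dist x (S x) ≤ ∑ j ∈ Finset.range r,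
        ((dist x u ^ l j - dist (S x) u ^ l j) / β j) ^ (1 / l j) := by
    intro x
    set p : ℕ → X := fun j => ((List.ofFn T).drop j).foldr (· ∘ ·) id x with hp
    have hpr : p r = x := by
      have hnil : (List.ofFn T).drop r = [] :=
        List.drop_eq_nil_of_le (by simp)
      simp [hp, hnil]
    have hp0 : p 0 = S x := rfl
    have hstep : ∀ j (h : j < r), p j = T ⟨j, h⟩ (p (j + 1)) := by
      intro j h
      have hlen : j < (List.ofFn T).length := by simpa using h
      simp only [hp]
      rw [List.drop_eq_getElem_cons hlen]
      simp [List.getElem_ofFn]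
    -- one-step estimates
    have hmono1 : ∀ j (h : j < r), dist (p j) u ≤ dist (p (j + 1)) u := by
      intro j h
      have h1 := hineq j h (p (j + 1))
      rw [← hstep j h] at h1
      have h2 : dist (p j) u ^ l j ≤ dist (p (j + 1)) u ^ l j := by
        have nn : (0:ℝ) ≤ β j * dist (p j) (p (j + 1)) ^ l j :=
          mul_nonneg (hβ j).le (Real.rpow_nonneg dist_nonneg _)
        linarith
      exact (Real.rpow_le_rpow_iff dist_nonneg dist_nonneg (hl j)).mp h2
    -- monotonicity along the block
    have mlow : ∀ j, j ≤ r → dist (p 0) u ≤ dist (p j) u := by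
      intro j
      induction j with
      | zero => exact fun _ => le_rfl
      | succ n ih =>
        intro hj
        exact le_trans (ih (Nat.le_of_succ_le hj)) (hmono1 n (by omega))
    have mhigh : ∀ k j, j + k = r → dist (p j) u ≤ dist (p r) u := by
      intro k
      induction k with
      | zero =>
        intro j hj
        rw [Nat.add_zero] at hj
        rw [hj]
      | succ n ih =>
        intro j hj
        exact le_trans (hmono1 j (by omega)) (ih (j + 1) (by omega))
    have hmono : ∀ j, j ≤ r → dist (S x) u ≤ dist (p j) u ∧ dist (p j) u ≤ dist x u := by
      intro j hj
      refine ⟨hp0 ▸ mlow j hj, hpr ▸ mhigh (r - j) j (by omega)⟩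
    constructor
    · exact (hmono 0 (Nat.zero_le r)).2
    · calc dist x (S x) = dist (p 0) (p r) := by rw [hp0, hpr, dist_comm]
        _ ≤ ∑ j ∈ Finset.range r, dist (p j) (p (j + 1)) := dist_le_range_sum_dist p r
        _ ≤ ∑ j ∈ Finset.range r,
            ((dist x u ^ l j - dist (S x) u ^ l j) / β j) ^ (1 / l j) := by
          apply Finset.sum_le_sum
          intro j hj
          have hjr : j < r := Finset.mem_range.mp hj
          have h1 := hineq j hjr (p (j + 1))
          rw [← hstep j hjr] at h1
          have hd : dist (T ⟨j, hjr⟩ (p (j + 1))) (p (j + 1)) = dist (p j) (p (j + 1)) := by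
            rw [← hstep j hjr]
          -- β j * step^l ≤ dist x u ^ l - dist (S x) u ^ l
          have h2 : β j * dist (p j) (p (j + 1)) ^ l j
              ≤ dist x u ^ l j - dist (S x) u ^ l j := by
            have ha : dist (p (j + 1)) u ^ l j ≤ dist x u ^ l j :=
              Real.rpow_le_rpow dist_nonneg ((hmono (j + 1) hjr).2) (hl j).le
            have hb : dist (S x) u ^ l j ≤ dist (p j) u ^ l j :=
              Real.rpow_le_rpow dist_nonneg ((hmono j hjr.le).1) (hl j).le
            linarith
          have h3 : dist (p j) (p (j + 1)) ^ l j
              ≤ (dist x u ^ l j - dist (S x) u ^ l j) / β j :=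
            (le_div_iff₀' (hβ j)).mpr h2
          calc dist (p j) (p (j + 1))
              = (dist (p j) (p (j + 1)) ^ l j) ^ (1 / l j) := by
                rw [one_div, Real.rpow_rpow_inv dist_nonneg (hl j).ne']
            _ ≤ ((dist x u ^ l j - dist (S x) u ^ l j) / β j) ^ (1 / l j) :=
                Real.rpow_le_rpow (by positivity) h3 (one_div_pos.mpr (hl j)).le
  -- the monotone sequence of distances to u
  set b : ℕ → ℝ := fun k => dist (S^[k] x₀) u with hb
  have hbsucc : ∀ k, b (k + 1) = dist (S (S^[k] x₀)) u := by
    intro k; simp only [hb, Function.iterate_succ_apply']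
  have hanti : Antitone b := antitone_nat_of_succ_le fun k => by
    rw [hbsucc]; exact (key _).1
  have hbdd : BddBelow (Set.range b) := ⟨0, by rintro y ⟨k, rfl⟩; exact dist_nonneg⟩
  have hL : Tendsto b atTop (𝓝 (⨅ k, b k)) := tendsto_atTop_ciInf hanti hbdd
  set L : ℝ := ⨅ k, b k with hLdef
  have hLpow : ∀ j : ℕ, Tendsto (fun k => b k ^ l j) atTop (𝓝 (L ^ l j)) := fun j =>
    ((Real.continuousAt_rpow_const L (l j) (Or.inr (hl j).le)).tendsto).comp hL
  have hc : ∀ j : ℕ, Tendsto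
      (fun k => ((b k ^ l j - b (k + 1) ^ l j) / β j) ^ (1 / l j)) atTop (𝓝 0) := by
    intro j
    have h1 : Tendsto (fun k => b (k + 1) ^ l j) atTop (𝓝 (L ^ l j)) :=
      (hLpow j).comp (tendsto_add_atTop_nat 1)
    have h2 : Tendsto (fun k => (b k ^ l j - b (k + 1) ^ l j) / β j) atTop (𝓝 0) := by
      have := ((hLpow j).sub h1).div_const (β j)
      simpa using this
    have h3 : ContinuousAt (fun t : ℝ => t ^ (1 / l j)) 0 :=
      Real.continuousAt_rpow_const 0 (1 / l j) (Or.inr (one_div_pos.mpr (hl j)).le)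
    have h4 := h3.tendsto.comp h2
    rw [Real.zero_rpow (one_div_pos.mpr (hl j)).ne'] at h4
    exact h4
  have hsum : Tendsto (fun k => ∑ j ∈ Finset.range r,
      ((b k ^ l j - b (k + 1) ^ l j) / β j) ^ (1 / l j)) atTop (𝓝 0) := by
    have := tendsto_finset_sum (Finset.range r) (fun j _ => hc j)
    simpa using this
  refine squeeze_zero (fun k => dist_nonneg) (fun k => ?_) hsum
  have hiter : (compFam T)^[k + 1] x₀ = S (S^[k] x₀) := by
    rw [hS, Function.iterate_succ_apply']
  calc dist ((compFam T)^[k] x₀) ((compFam T)^[k + 1] x₀)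
      = dist (S^[k] x₀) (S (S^[k] x₀)) := by rw [hiter]
    _ ≤ ∑ j ∈ Finset.range r,
        ((dist (S^[k] x₀) u ^ l j - dist (S (S^[k] x₀)) u ^ l j) / β j) ^ (1 / l j) :=
        (key (S^[k] x₀)).2
    _ = ∑ j ∈ Finset.range r,
        ((b k ^ l j - b (k + 1) ^ l j) / β j) ^ (1 / l j) := by
        simp only [hbsucc]
        rfl
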